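/- For 1 ≤ p < ∞ and any vector z = (u,v) ∈ ℂ² with ‖z‖_p = 1 and u ≠ 0 and v ≠ 0, the following are equivalent: (i) both [F₁ z, z]_p and [F₂ z, z]_p are nonnegative real numbers (i.e., σ₂ is a physical quantity at the pure state |z⟩); (ii) the complex number w = i·((v/u)·|u|^p − (u/v)·|v|^p) is real and satisfies −1 ≤ w ≤ 1. -/

import Mathlib

/-- sign of a complex number: `u/|u|` if `u ≠ 0`, else `0`. -/
noncomputable def csign (u : ℂ) : ℂ := if u = 0 then 0 else u / (‖u‖ : ℂ)

/-- the `p`-norm on `ℂ²`: `‖(a,b)‖_p = (|a|^p + |b|^p)^{1/p}`. -/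
noncomputable def pnorm (p : ℝ) (x : Fin 2 → ℂ) : ℝ :=
  (‖x 0‖ ^ p + ‖x 1‖ ^ p) ^ (1 / p)

/-- the semi-inner product `[x,y]_p = ‖y‖_p^{2-p} (a·sign(c̄)|c|^{p-1} + b·sign(d̄)|d|^{p-1})`. -/
noncomputable def sip (p : ℝ) (x y : Fin 2 → ℂ) : ℂ :=
  ((pnorm p y ^ (2 - p) : ℝ) : ℂ) *
    (x 0 * csign ((starRingEnd ℂ) (y 0)) * ((‖y 0‖ ^ (p - 1) : ℝ) : ℂ) +
     x 1 * csign ((starRingEnd ℂ) (y 1)) * ((‖y 1‖ ^ (p - 1) : ℝ) : ℂ))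

lemma key (p : ℝ) (u : ℂ) (hu : u ≠ 0) :
    csign ((starRingEnd ℂ) u) * ((‖u‖ ^ (p - 1) : ℝ) : ℂ)
      = ((‖u‖ ^ p : ℝ) : ℂ) / u := by
  have hup : (0:ℝ) < ‖u‖ := norm_pos_iff.mpr hu
  have hcu : csign ((starRingEnd ℂ) u) = (starRingEnd ℂ) u / (‖u‖ : ℂ) := by
    unfold csign
    rw [if_neg (by simpa using hu)]
    simp [Complex.norm_conj]
  have h1 : ‖u‖ ^ (p - 1) = ‖u‖ ^ p / ‖u‖ := by
    rw [eq_div_iff hup.ne', ← Real.rpow_add_one hup.ne']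
    ring_nf
  have habs : ((‖u‖ : ℝ) : ℂ) * ((‖u‖ : ℝ) : ℂ) = u * (starRingEnd ℂ) u := by
    rw [Complex.mul_conj]
    push_cast [Complex.normSq_eq_norm_sq]
    ring
  have hc0 : ((‖u‖ : ℝ) : ℂ) ≠ 0 := by exact_mod_cast hup.ne'
  rw [hcu, h1]
  push_cast
  rw [div_mul_div_comm, div_eq_div_iff (by exact mul_ne_zero hc0 hc0) hu]
  linear_combination (-((‖u‖ ^ p : ℝ) : ℂ)) * habs


/-- for `1 ≤ p < ∞` and a unit vector `z = (u,v)` in `(ℂ², ‖·‖_p)` with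
`u ≠ 0` and `v ≠ 0`: both `[F₁z,z]_p` and `[F₂z,z]_p` are nonnegative real numbers
(i.e. `σ₂` is a physical quantity at `|z⟩`) if and only if
`w = i((v/u)|u|^p - (u/v)|v|^p)` is real with `-1 ≤ w ≤ 1`. -/
theorem pauli_sigma2_physical_quantity_iff (p : ℝ) (hp : 1 ≤ p)
    (F₁ F₂ : Matrix (Fin 2) (Fin 2) ℂ)
    (hF₁ : F₁ = !![1 / 2, -Complex.I / 2; Complex.I / 2, 1 / 2])
    (hF₂ : F₂ = !![1 / 2, Complex.I / 2; -Complex.I / 2, 1 / 2])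
    (z : Fin 2 → ℂ) (hz : pnorm p z = 1) (hu : z 0 ≠ 0) (hv : z 1 ≠ 0) :
    (((sip p (F₁.mulVec z) z).im = 0 ∧ 0 ≤ (sip p (F₁.mulVec z) z).re) ∧
     ((sip p (F₂.mulVec z) z).im = 0 ∧ 0 ≤ (sip p (F₂.mulVec z) z).re)) ↔
    ((Complex.I * (z 1 / z 0 * ((‖z 0‖ ^ p : ℝ) : ℂ)
        - z 0 / z 1 * ((‖z 1‖ ^ p : ℝ) : ℂ))).im = 0 ∧
      -1 ≤ (Complex.I * (z 1 / z 0 * ((‖z 0‖ ^ p : ℝ) : ℂ)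
        - z 0 / z 1 * ((‖z 1‖ ^ p : ℝ) : ℂ))).re ∧
      (Complex.I * (z 1 / z 0 * ((‖z 0‖ ^ p : ℝ) : ℂ)
        - z 0 / z 1 * ((‖z 1‖ ^ p : ℝ) : ℂ))).re ≤ 1) := by
  have hp0 : p ≠ 0 := by linarith
  set u := z 0 with hu0
  set v := z 1 with hv0
  set A : ℝ := ‖u‖ ^ p with hA0
  set B : ℝ := ‖v‖ ^ p with hB0
  set W : ℂ := Complex.I * (v / u * (A : ℂ) - u / v * (B : ℂ)) with hW0
  have hAB : A + B = 1 := by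
    have hnn : (0:ℝ) ≤ A + B := by positivity
    have h2 : ((A + B) ^ (1/p)) ^ p = 1 := by
      rw [show (A + B) ^ (1/p) = pnorm p z from rfl, hz, Real.one_rpow]
    rwa [← Real.rpow_mul hnn, one_div, inv_mul_cancel₀ hp0, Real.rpow_one] at h2
  have hABc : (A : ℂ) + (B : ℂ) = 1 := by exact_mod_cast hAB
  have hsip : ∀ x : Fin 2 → ℂ,
      sip p x z = x 0 * ((A : ℂ) / u) + x 1 * ((B : ℂ) / v) := by
    intro x
    unfold sip
    rw [hz, Real.one_rpow, mul_assoc (x 0), mul_assoc (x 1), key p u hu, key p v hv]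
    push_cast
    ring
  have hm1 : (F₁.mulVec z) 0 = u / 2 - Complex.I * v / 2 ∧
      (F₁.mulVec z) 1 = Complex.I * u / 2 + v / 2 := by
    subst hF₁
    constructor <;> simp [Matrix.mulVec, dotProduct, Fin.sum_univ_two] <;> ring
  have hm2 : (F₂.mulVec z) 0 = u / 2 + Complex.I * v / 2 ∧
      (F₂.mulVec z) 1 = -(Complex.I * u) / 2 + v / 2 := by
    subst hF₂
    constructor <;> simp [Matrix.mulVec, dotProduct, Fin.sum_univ_two] <;> ring
  have e1 : sip p (F₁.mulVec z) z = (1 - W) / ((2:ℝ) : ℂ) := by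
    rw [hsip, hm1.1, hm1.2, hW0]
    push_cast
    field_simp
    linear_combination (u * v) * hABc
  have e2 : sip p (F₂.mulVec z) z = (1 + W) / ((2:ℝ) : ℂ) := by
    rw [hsip, hm2.1, hm2.2, hW0]
    push_cast
    field_simp
    linear_combination (u * v) * hABc
  rw [e1, e2]
  simp only [Complex.div_ofReal_im, Complex.div_ofReal_re, Complex.sub_im, Complex.sub_re,
    Complex.add_im, Complex.add_re, Complex.one_im, Complex.one_re]
  constructor
  · rintro ⟨⟨h1, h2⟩, ⟨h3, h4⟩⟩
    refine ⟨by linarith, by nlinarith, by nlinarith⟩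
  · rintro ⟨h1, h2, h3⟩
    refine ⟨⟨by simp [h1], by nlinarith⟩, ⟨by simp [h1], by nlinarith⟩⟩
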